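/- Let R = K[x_1,...,x_r] be a polynomial ring over an F-finite field of characteristic p, and let I be a square-free monomial ideal. Then I is symbolic F-pure: there is a Frobenius splitting φ with φ((I^{(np+1)})^{1/p}) ⊆ I^{(n+1)} for all n ≥ 0. -/

import Mathlib

set_option maxHeartbeats 1000000
set_option synthInstance.maxHeartbeats 400000

noncomputable section

section Core
variable {R : Type*} [CommRing R]

/-- A Frobenius splitting: identifying `R^{1/p}` with `R` via `p`-th roots, an additive map
`φ : R^{1/p} → R` which is `R`-linear (`φ(a^p b^{1/p}) = a φ(b^{1/p})`) and splits the
inclusion `R ⊆ R^{1/p}` (equivalently `φ 1 = 1`). -/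
def IsFrobeniusSplitting (p : ℕ) (φ : R → R) : Prop :=
  (∀ a b : R, φ (a + b) = φ a + φ b) ∧ (∀ a b : R, φ (a ^ p * b) = a * φ b) ∧ φ 1 = 1

/-- A ring is `F`-split (`F`-pure in the `F`-finite case) if Frobenius splits. -/
def IsFSplitRing (p : ℕ) (A : Type*) [CommRing A] : Prop :=
  ∃ φ : A → A, IsFrobeniusSplitting p φ

/-- `A` is `F`-finite: `A` is a finitely generated module over its subring of `p`-th powers. -/
def IsFFiniteRing (p : ℕ) (A : Type*) [CommRing A] : Prop :=
  ∃ (n : ℕ) (g : Fin n → A), ∀ x : A, ∃ c : Fin n → A, x = ∑ i, c i ^ p * g i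

/-- A filtration of ideals. -/
def IsIdealFiltration (I : ℕ → Ideal R) : Prop :=
  I 0 = ⊤ ∧ (∀ n, I (n + 1) ≤ I n) ∧ ∀ m n, I m * I n ≤ I (m + n)

/-- An `F`-pure filtration. -/
def IsFPureFiltration (p : ℕ) (I : ℕ → Ideal R) : Prop :=
  IsIdealFiltration I ∧ ∃ φ : R → R, IsFrobeniusSplitting p φ ∧
    ∀ n : ℕ, ∀ x ∈ I (n * p + 1), φ x ∈ I (n + 1)

/-- The Frobenius power `J^{[p]}` of an ideal. -/
def Ideal.frobPow (p : ℕ) (J : Ideal R) : Ideal R :=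
  Ideal.span ((fun a => a ^ p) '' (J : Set R))

/-- The `n`-th symbolic power `I^{(n)}`. -/
def Ideal.symbPow (I : Ideal R) (n : ℕ) : Ideal R where
  carrier := {r : R | ∃ s : R, (∀ P ∈ I.minimalPrimes, s ∉ P) ∧ s * r ∈ I ^ n}
  zero_mem' :=
    ⟨1, fun P hP h1 => hP.1.1.ne_top ((Ideal.eq_top_iff_one P).mpr h1), by simp⟩
  add_mem' := by
    rintro a b ⟨s, hs, hsa⟩ ⟨t, ht, htb⟩
    refine ⟨s * t, fun P hP hst => ((hP.1.1.mem_or_mem hst).elim (hs P hP) (ht P hP)), ?_⟩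
    have h1 : (s * t) * (a + b) = t * (s * a) + s * (t * b) := by ring
    rw [h1]
    exact (I ^ n).add_mem (Ideal.mul_mem_left _ _ hsa) (Ideal.mul_mem_left _ _ htb)
  smul_mem' := by
    rintro c x ⟨s, hs, hsx⟩
    refine ⟨s, hs, ?_⟩
    have h1 : s * (c • x) = c * (s * x) := by
      simp only [smul_eq_mul]; ring
    rw [h1]
    exact Ideal.mul_mem_left _ _ hsx

end Core



open MvPolynomial
open scoped Classical
set_option linter.unusedVariables false
set_option linter.unnecessarySimpa false


theorem exists_field_splitting (K : Type*) [Field K] (p : ℕ) (hp : p.Prime) [CharP K p] :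
    ∃ θ : K → K, (∀ a b, θ (a+b) = θ a + θ b) ∧ (∀ a b, θ (a^p * b) = a * θ b) ∧ θ 1 = 1 := by
  haveI := Fact.mk hp
  set F : K →+* K := frobenius K p with hF
  have hFapp : ∀ a : K, F a = a ^ p := fun a => frobenius_def p a
  have hFinj : Function.Injective F := F.injective
  set Kp : Subfield K := F.fieldRange with hKp
  have hmemKp : ∀ y : K, y ∈ Kp ↔ ∃ x, F x = y := fun y => RingHom.mem_fieldRange
  -- p-th root function on Kp
  let rt : Kp → K := fun y => ((hmemKp y.1).mp y.2).choose
  have hrt : ∀ y : Kp, F (rt y) = (y : K) := fun y => ((hmemKp y.1).mp y.2).choose_spec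
  have hrt_add : ∀ y z : Kp, rt (y + z) = rt y + rt z := by
    intro y z
    apply hFinj
    rw [map_add, hrt, hrt, hrt]; rfl
  have hrt_one : rt 1 = 1 := by
    apply hFinj; rw [hrt, map_one]; rfl
  have hrt_mul : ∀ (a : K) (y : Kp), rt (⟨F a, (hmemKp _).mpr ⟨a, rfl⟩⟩ * y) = a * rt y := by
    intro a y
    apply hFinj
    rw [map_mul, hrt, hrt]; rfl
  -- basis of K over Kp containing 1
  have h1 : (1 : K) ≠ 0 := one_ne_zero
  have li : LinearIndepOn Kp id ({1} : Set K) := LinearIndepOn.singleton (by simpa)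
  let b := Module.Basis.extend li
  have h1mem : (1 : K) ∈ li.extend (Set.subset_univ _) := li.subset_extend _ rfl
  let i0 : li.extend (Set.subset_univ _) := ⟨1, h1mem⟩
  let coord : K →ₗ[Kp] Kp := b.coord i0
  refine ⟨fun x => rt (coord x), ?_, ?_, ?_⟩
  · intro a c
    show rt (coord (a + c)) = rt (coord a) + rt (coord c)
    rw [map_add, hrt_add]
  · intro a c
    have h1 : a ^ p * c = (⟨F a, (hmemKp _).mpr ⟨a, rfl⟩⟩ : Kp) • c := by
      simp [Subfield.smul_def, hFapp]
    show rt (coord (a ^ p * c)) = a * rt (coord c)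
    rw [h1, map_smul]
    have h2 : (⟨F a, (hmemKp _).mpr ⟨a, rfl⟩⟩ : Kp) • coord c
        = (⟨F a, (hmemKp _).mpr ⟨a, rfl⟩⟩ : Kp) * coord c := rfl
    rw [h2, hrt_mul]
  · have hb : b i0 = 1 := Module.Basis.extend_apply_self li i0
    have : coord 1 = 1 := by
      rw [← hb]
      simp [coord, Module.Basis.coord_apply]
    show rt (coord 1) = 1
    rw [this, hrt_one]

section Phi
variable {K : Type*} [Field K] {p r : ℕ}

/-- divide exponent vector by p -/
def qdiv (p : ℕ) (d : Fin r →₀ ℕ) : Fin r →₀ ℕ := d.mapRange (· / p) (Nat.zero_div p)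

@[simp] lemma qdiv_apply (p : ℕ) (d : Fin r →₀ ℕ) (i : Fin r) : qdiv p d i = d i / p :=
  Finsupp.mapRange_apply

def phiFun (p : ℕ) (θ : K → K) (f : MvPolynomial (Fin r) K) : MvPolynomial (Fin r) K :=
  Finsupp.sum (AddMonoidAlgebra.coeff f) fun d c =>
    if ∀ i, p ∣ d i then monomial (qdiv p d) (θ c) else 0

lemma phiFun_monomial (p : ℕ) (θ : K → K) (hθ0 : θ 0 = 0) (d : Fin r →₀ ℕ) (c : K) :
    phiFun p θ (monomial d c) =
      if ∀ i, p ∣ d i then monomial (qdiv p d) (θ c) else 0 := by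
  rw [phiFun, ← single_eq_monomial, AddMonoidAlgebra.coeff_single, Finsupp.sum_single_index]
  simp [hθ0]

lemma phiFun_add (p : ℕ) (θ : K → K) (hθ0 : θ 0 = 0)
    (hθa : ∀ a b, θ (a + b) = θ a + θ b) (f g : MvPolynomial (Fin r) K) :
    phiFun p θ (f + g) = phiFun p θ f + phiFun p θ g := by
  rw [phiFun, phiFun, phiFun, AddMonoidAlgebra.coeff_add, Finsupp.sum_add_index]
  · intro d _; simp [hθ0]
  · intro d _ c1 c2
    by_cases h : ∀ i, p ∣ d i <;> simp [h, hθa]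

end Phi

section Phi2
variable {K : Type*} [Field K] {p r : ℕ}

lemma phiFun_pow_mul (hp : p.Prime) [CharP K p] (θ : K → K) (hθ0 : θ 0 = 0)
    (hθa : ∀ a b, θ (a + b) = θ a + θ b) (hθm : ∀ a b, θ (a ^ p * b) = a * θ b)
    (f g : MvPolynomial (Fin r) K) :
    phiFun p θ (f ^ p * g) = f * phiFun p θ g := by
  haveI := Fact.mk hp
  induction g using MvPolynomial.induction_on' with
  | add g1 g2 ih1 ih2 =>
      rw [mul_add, phiFun_add p θ hθ0 hθa, phiFun_add p θ hθ0 hθa, ih1, ih2, mul_add]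
  | monomial d c =>
      induction f using MvPolynomial.induction_on' with
      | add f1 f2 ih1 ih2 =>
          rw [add_pow_char, add_mul, phiFun_add p θ hθ0 hθa, ih1, ih2, add_mul]
      | monomial u a =>
          rw [monomial_pow, monomial_mul, phiFun_monomial p θ hθ0,
            phiFun_monomial p θ hθ0]
          have hcond : (∀ i, p ∣ (p • u + d) i) ↔ ∀ i, p ∣ d i := by
            constructor <;> intro h i <;> have := h i <;>
              simp only [Finsupp.add_apply, Finsupp.smul_apply, smul_eq_mul] at * <;>
              [skip; skip]
            · exact (Nat.dvd_add_right (Dvd.intro _ rfl)).mp this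
            · exact Nat.dvd_add (Dvd.intro _ rfl) this
          by_cases h : ∀ i, p ∣ d i
          · rw [if_pos h, if_pos (hcond.mpr h)]
            have hq : qdiv p (p • u + d) = u + qdiv p d := by
              ext i
              simp only [qdiv_apply, Finsupp.add_apply, Finsupp.smul_apply, smul_eq_mul]
              rw [Nat.mul_add_div hp.pos]
            rw [hq, hθm, ← monomial_mul]
          · rw [if_neg h, if_neg (fun hc => h (hcond.mp hc)), mul_zero]

lemma phiFun_one (hp : p.Prime) (θ : K → K) (hθ1 : θ 1 = 1) (hθ0 : θ 0 = 0) :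
    phiFun p θ (1 : MvPolynomial (Fin r) K) = 1 := by
  have h1 : (1 : MvPolynomial (Fin r) K) = monomial 0 1 := by
    rw [monomial_zero', C_1]
  rw [h1, phiFun_monomial p θ hθ0, if_pos (fun i => by simp)]
  have : qdiv p (0 : Fin r →₀ ℕ) = 0 := by ext i; simp
  rw [this, hθ1]

end Phi2

section PA
variable {K : Type*} [Field K] {r : ℕ}

def PA (K : Type*) [Field K] {r : ℕ} (A : Set (Fin r)) : Ideal (MvPolynomial (Fin r) K) :=
  Ideal.span ((fun i => (X i : MvPolynomial (Fin r) K)) '' A)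

def killHom (K : Type*) [Field K] {r : ℕ} (A : Set (Fin r)) :
    MvPolynomial (Fin r) K →ₐ[K] MvPolynomial (Fin r) K :=
  aeval (fun i => if i ∈ A then 0 else X i)

lemma killHom_monomial (A : Set (Fin r)) (d : Fin r →₀ ℕ) (c : K) :
    killHom K A (monomial d c) = if (∀ i ∈ A, d i = 0) then monomial d c else 0 := by
  rw [killHom, aeval_monomial]
  by_cases h : ∀ i ∈ A, d i = 0
  · rw [if_pos h]
    have : (d.prod fun i n => (if i ∈ A then 0 else X i : MvPolynomial (Fin r) K) ^ n)
        = d.prod fun i n => (X i) ^ n := by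
      apply Finsupp.prod_congr
      intro i hi
      have : i ∉ A := fun hiA => (Finsupp.mem_support_iff.mp hi) (h i hiA)
      rw [if_neg this]
    rw [this]
    have h2 : (algebraMap K (MvPolynomial (Fin r) K)) c = C c := rfl
    rw [h2, ← monomial_eq]
  · rw [if_neg h]
    push_neg at h
    obtain ⟨i, hiA, hdi⟩ := h
    have hi : i ∈ d.support := Finsupp.mem_support_iff.mpr hdi
    rw [Finsupp.prod, Finset.prod_eq_zero hi (by rw [if_pos hiA, zero_pow hdi]), mul_zero]

lemma monomial_mem_PA {A : Set (Fin r)} {d : Fin r →₀ ℕ} {c : K} {i : Fin r}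
    (hi : i ∈ A) (hdi : d i ≠ 0) : monomial d c ∈ PA K A := by
  have hle : Finsupp.single i 1 ≤ d := by
    rw [Finsupp.single_le_iff]; omega
  have : monomial d c = monomial (d - Finsupp.single i 1) c * X i := by
    rw [X, monomial_mul, mul_one, tsub_add_cancel_of_le hle]
  rw [this]
  exact Ideal.mul_mem_left _ _ (Ideal.subset_span ⟨i, hi, rfl⟩)

lemma sub_killHom_mem (A : Set (Fin r)) (f : MvPolynomial (Fin r) K) :
    f - killHom K A f ∈ PA K A := by
  induction f using MvPolynomial.induction_on' with
  | add f g hf hg =>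
      rw [map_add]
      have : f + g - (killHom K A f + killHom K A g)
          = (f - killHom K A f) + (g - killHom K A g) := by ring
      rw [this]; exact Ideal.add_mem _ hf hg
  | monomial d c =>
      rw [killHom_monomial]
      by_cases h : ∀ i ∈ A, d i = 0
      · rw [if_pos h, sub_self]; exact Ideal.zero_mem _
      · rw [if_neg h, sub_zero]
        push_neg at h
        obtain ⟨i, hiA, hdi⟩ := h
        exact monomial_mem_PA hiA hdi

lemma ker_killHom (A : Set (Fin r)) : RingHom.ker (killHom K A) = PA K A := by
  apply le_antisymm
  · intro f hf
    have h0 : killHom K A f = 0 := hf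
    have := sub_killHom_mem A f
    rwa [h0, sub_zero] at this
  · rw [PA, Ideal.span_le]
    rintro _ ⟨i, hiA, rfl⟩
    show (X i : MvPolynomial (Fin r) K) ∈ (RingHom.ker (killHom K A) : Set (MvPolynomial (Fin r) K))
    rw [SetLike.mem_coe, RingHom.mem_ker]
    show aeval (fun i => if i ∈ A then 0 else X i) (X i) = 0
    rw [aeval_X, if_pos hiA]

lemma PA_isPrime (A : Set (Fin r)) : (PA K A).IsPrime := by
  rw [← ker_killHom]
  exact RingHom.ker_isPrime _

lemma monomial_not_mem_PA {A : Set (Fin r)} {d : Fin r →₀ ℕ} {c : K}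
    (h : ∀ i ∈ A, d i = 0) (hc : c ≠ 0) : monomial d c ∉ PA K A := by
  rw [← ker_killHom]
  intro hmem
  have : killHom K A (monomial d c) = 0 := hmem
  rw [killHom_monomial, if_pos h] at this
  exact hc (by simpa [MvPolynomial.monomial_eq_zero] using this)

end PA


section MinP
variable {K : Type*} [Field K] {r : ℕ}

lemma exists_var_mem {P : Ideal (MvPolynomial (Fin r) K)} (hP : P.IsPrime)
    {v : Fin r →₀ ℕ} (hv : monomial v (1 : K) ∈ P) : ∃ i, v i ≠ 0 ∧ X i ∈ P := by
  have hm : monomial v (1 : K) = ∏ i ∈ v.support, (X i) ^ v i := by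
    rw [monomial_eq, C_1, one_mul, Finsupp.prod]
  rw [hm] at hv
  haveI := hP
  obtain ⟨i, hi, hpow⟩ := (Ideal.IsPrime.prod_mem_iff).mp hv
  exact ⟨i, Finsupp.mem_support_iff.mp hi, hP.mem_of_pow_mem _ hpow⟩

end MinP
section MinP2
variable {K : Type*} [Field K] {r : ℕ}
variable {S : Set (Fin r →₀ ℕ)} {I : Ideal (MvPolynomial (Fin r) K)}

lemma minPrime_cover (hI : I = Ideal.span ((fun v => (monomial v (1 : K))) '' S))
    {P : Ideal (MvPolynomial (Fin r) K)} (hP : P ∈ I.minimalPrimes) :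
    ∀ v ∈ S, ∃ i, v i ≠ 0 ∧ X i ∈ P := by
  intro v hv
  have hvP : monomial v (1 : K) ∈ P :=
    hP.1.2 (hI ▸ Ideal.subset_span ⟨v, hv, rfl⟩)
  exact exists_var_mem hP.1.1 hvP

lemma minPrime_min (hI : I = Ideal.span ((fun v => (monomial v (1 : K))) '' S))
    {P : Ideal (MvPolynomial (Fin r) K)} (hP : P ∈ I.minimalPrimes) :
    ∀ i₀, X i₀ ∈ P → ∃ v ∈ S, v i₀ ≠ 0 ∧ ∀ j, j ≠ i₀ → X j ∈ P → v j = 0 := by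
  intro i₀ hXi₀
  by_contra hc
  push_neg at hc
  set A' : Set (Fin r) := {i | X i ∈ P ∧ i ≠ i₀} with hA'
  have hIA' : I ≤ PA K A' := by
    rw [hI, Ideal.span_le]
    rintro _ ⟨v, hv, rfl⟩
    obtain ⟨i, hvi, hXi⟩ := minPrime_cover hI hP v hv
    by_cases hii : i = i₀
    · subst hii
      obtain ⟨j, hj, hXj, hvj⟩ := hc v hv hvi
      exact monomial_mem_PA (show j ∈ A' from ⟨hXj, hj⟩) hvj
    · exact monomial_mem_PA (show i ∈ A' from ⟨hXi, hii⟩) hvi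
  have hA'P : PA K A' ≤ P := by
    rw [PA, Ideal.span_le]
    rintro _ ⟨i, hi, rfl⟩
    exact hi.1
  have hPle : P ≤ PA K A' := hP.2 ⟨PA_isPrime A', hIA'⟩ hA'P
  have hXmem : X i₀ ∈ PA K A' := hPle hXi₀
  have : (monomial (Finsupp.single i₀ 1) (1 : K)) ∉ PA K A' := by
    apply monomial_not_mem_PA _ one_ne_zero
    intro i hi
    rw [Finsupp.single_apply, if_neg (fun h => hi.2 h.symm)]
  have hX : (X i₀ : MvPolynomial (Fin r) K) = monomial (Finsupp.single i₀ 1) 1 := rfl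
  exact this (hX ▸ hXmem)

lemma minPrime_eq_PA (hI : I = Ideal.span ((fun v => (monomial v (1 : K))) '' S))
    {P : Ideal (MvPolynomial (Fin r) K)} (hP : P ∈ I.minimalPrimes) :
    P = PA K {i | X i ∈ P} := by
  have hIA : I ≤ PA K {i | X i ∈ P} := by
    rw [hI, Ideal.span_le]
    rintro _ ⟨v, hv, rfl⟩
    obtain ⟨i, hvi, hXi⟩ := minPrime_cover hI hP v hv
    exact monomial_mem_PA hXi hvi
  have hAP : PA K {i | X i ∈ P} ≤ P := by
    rw [PA, Ideal.span_le]
    rintro _ ⟨i, hi, rfl⟩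
    exact hi
  exact le_antisymm (hP.2 ⟨PA_isPrime _, hIA⟩ hAP) hAP

end MinP2
section Comb
variable {K : Type*} [Field K] {r : ℕ}

lemma exists_sub_fun (s : Finset (Fin r)) (f : Fin r → ℕ) (N : ℕ)
    (h : N ≤ ∑ i ∈ s, f i) :
    ∃ g : Fin r → ℕ, (∀ i, g i ≤ f i) ∧ (∀ i, i ∉ s → g i = 0) ∧ ∑ i ∈ s, g i = N := by
  induction N with
  | zero => exact ⟨fun _ => 0, fun i => Nat.zero_le _, fun _ _ => rfl, by simp⟩
  | succ n ih =>
      obtain ⟨g, hg1, hg2, hg3⟩ := ih (Nat.le_of_succ_le h)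
      have : ∃ i ∈ s, g i < f i := by
        by_contra hc
        push_neg at hc
        have : ∑ i ∈ s, f i ≤ ∑ i ∈ s, g i := Finset.sum_le_sum hc
        omega
      obtain ⟨i0, hi0, hlt⟩ := this
      refine ⟨fun i => if i = i0 then g i + 1 else g i, ?_, ?_, ?_⟩
      · intro i; by_cases hii : i = i0 <;> simp [hii] <;> [subst hii; skip] <;> [omega; exact hg1 i]
      · intro i hi
        have hne : i ≠ i0 := fun h => hi (h ▸ hi0)
        simp only [if_neg hne]; exact hg2 i hi
      · have hsplit : ∑ i ∈ s, (fun i => if i = i0 then g i + 1 else g i) i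
            = ∑ i ∈ s, g i + ∑ i ∈ s, (if i = i0 then 1 else 0) := by
          rw [← Finset.sum_add_distrib]
          apply Finset.sum_congr rfl
          intro i _
          by_cases hii : i = i0 <;> simp [hii]
        rw [hsplit, Finset.sum_ite_eq' s i0 (fun _ => 1), if_pos hi0, hg3]

lemma monomial_prod_mem {I : Ideal (MvPolynomial (Fin r) K)} (s : Finset (Fin r))
    (k : Fin r → ℕ) (w : Fin r → (Fin r →₀ ℕ))
    (h : ∀ i ∈ s, monomial (w i) (1 : K) ∈ I) :
    monomial (∑ i ∈ s, k i • w i) (1 : K) ∈ I ^ (∑ i ∈ s, k i) := by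
  classical
  induction s using Finset.induction_on with
  | empty => simpa using Ideal.mem_top (monomial 0 1)
  | insert _ _ hnotmem ih =>
      rename_i a s
      rw [Finset.sum_insert hnotmem, Finset.sum_insert hnotmem, pow_add]
      have h1 : monomial (k a • w a) (1 : K) = (monomial (w a) (1 : K)) ^ (k a) := by
        rw [monomial_pow, one_pow]
      have h2 := ih (fun i hi => h i (Finset.mem_insert_of_mem hi))
      have : monomial (k a • w a + ∑ i ∈ s, k i • w i) (1 : K)
          = monomial (k a • w a) 1 * monomial (∑ i ∈ s, k i • w i) 1 := by
        rw [monomial_mul, one_mul]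
      rw [this, h1]
      exact Ideal.mul_mem_mul (Ideal.pow_mem_pow (h a (Finset.mem_insert_self a s)) _) h2

lemma monomial_list_mem {I : Ideal (MvPolynomial (Fin r) K)} (L : List (Fin r →₀ ℕ))
    (h : ∀ v ∈ L, monomial v (1 : K) ∈ I) :
    monomial L.sum (1 : K) ∈ I ^ L.length := by
  induction L with
  | nil => simpa using Ideal.mem_top (monomial 0 1)
  | cons v L ih =>
      rw [List.sum_cons, List.length_cons, pow_succ']
      have : monomial (v + L.sum) (1 : K) = monomial v 1 * monomial L.sum 1 := by
        rw [monomial_mul, one_mul]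
      rw [this]
      exact Ideal.mul_mem_mul (h v (List.mem_cons_self)) (ih fun u hu => h u (List.mem_cons_of_mem _ hu))

lemma monomial_mem_of_le {J : Ideal (MvPolynomial (Fin r) K)} {w' w : Fin r →₀ ℕ} (c : K)
    (hle : w' ≤ w) (h : monomial w' (1 : K) ∈ J) : monomial w c ∈ J := by
  obtain ⟨d, rfl⟩ := le_iff_exists_add.mp hle
  have : monomial (w' + d) c = monomial d c * monomial w' 1 := by
    rw [monomial_mul, mul_one, add_comm]
  rw [this]
  exact Ideal.mul_mem_left _ _ h

lemma length_le_sum (s : Finset (Fin r)) (L : List (Fin r →₀ ℕ))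
    (h : ∀ v ∈ L, ∃ i ∈ s, v i ≠ 0) :
    L.length ≤ ∑ i ∈ s, (L.sum) i := by
  induction L with
  | nil => simp
  | cons v L ih =>
      have hsum : ∀ i, (v + L.sum) i = v i + L.sum i := fun i => rfl
      have h1 : ∑ i ∈ s, ((v + L.sum) : Fin r →₀ ℕ) i = ∑ i ∈ s, v i + ∑ i ∈ s, (L.sum) i := by
        simp [hsum, Finset.sum_add_distrib]
      obtain ⟨i0, hi0, hvi0⟩ := h v (List.mem_cons_self)
      have h2 : 1 ≤ ∑ i ∈ s, v i :=
        le_trans (Nat.one_le_iff_ne_zero.mpr hvi0) (Finset.single_le_sum (fun _ _ => Nat.zero_le _) hi0)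
      have h3 := ih (fun u hu => h u (List.mem_cons_of_mem _ hu))
      simp only [List.sum_cons, List.length_cons]
      rw [h1]; omega

end Comb

section Key
variable {K : Type*} [Field K] {p r : ℕ}
variable {S : Set (Fin r →₀ ℕ)} {I : Ideal (MvPolynomial (Fin r) K)}

lemma mem_symbPow {x : MvPolynomial (Fin r) K} {n : ℕ} :
    x ∈ I.symbPow n ↔
      ∃ s, (∀ P ∈ I.minimalPrimes, s ∉ P) ∧ s * x ∈ I ^ n := Iff.rfl

lemma key_mem_symbPow (hp : p.Prime)
    (hS : ∀ v ∈ S, ∀ i, v i ≤ 1)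
    (hI : I = Ideal.span ((fun v => (monomial v (1 : K))) '' S))
    (n : ℕ) (z u : Fin r →₀ ℕ) (c : K) (L : List (Fin r →₀ ℕ))
    (hL : ∀ v ∈ L, v ∈ S) (hlen : L.length = n * p + 1)
    (hz : p • z = u + L.sum) :
    monomial z c ∈ I.symbPow (n + 1) := by
  have hpz : ∀ i, p * z i = u i + L.sum i := by
    intro i
    have := congrArg (fun f : Fin r →₀ ℕ => f i) hz
    simpa using this
  -- for each minimal prime P, find t ∉ P with t * monomial z 1 ∈ I^(n+1)
  have htP : ∀ P ∈ I.minimalPrimes,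
      ∃ t, t * monomial z (1 : K) ∈ I ^ (n + 1) ∧ t ∉ P := by
    intro P hP
    set A : Finset (Fin r) := Finset.univ.filter (fun i => X i ∈ P) with hA
    have hmemA : ∀ i, i ∈ A ↔ X i ∈ P := by
      intro i; simp [hA]
    -- counting
    have hcount : n * p + 1 ≤ ∑ i ∈ A, (L.sum) i := by
      rw [← hlen]
      apply length_le_sum
      intro v hv
      obtain ⟨i, h1, h2⟩ := minPrime_cover hI hP v (hL v hv)
      exact ⟨i, (hmemA i).mpr h2, h1⟩
    have hsumz : n + 1 ≤ ∑ i ∈ A, z i := by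
      by_contra hcon
      push_neg at hcon
      have h1 : n * p + 1 ≤ p * ∑ i ∈ A, z i := by
        calc n * p + 1 ≤ ∑ i ∈ A, (L.sum) i := hcount
        _ ≤ ∑ i ∈ A, (u i + (L.sum) i) := Finset.sum_le_sum (fun i _ => Nat.le_add_left _ _)
        _ = ∑ i ∈ A, p * z i := Finset.sum_congr rfl (fun i _ => (hpz i).symm)
        _ = p * ∑ i ∈ A, z i := (Finset.mul_sum _ _ _).symm
      have h2 : p * ∑ i ∈ A, z i ≤ p * n := Nat.mul_le_mul_left p (by omega)
      have h3 : n * p + 1 ≤ n * p := by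
        rw [mul_comm p n] at h2; omega
      omega
    obtain ⟨k, hk1, hk2, hk3⟩ := exists_sub_fun A (fun i => z i) (n + 1) hsumz
    -- choose squarefree generators witnessing minimality
    have hmin := minPrime_min hI hP
    choose w hwS hwi hwj using hmin
    set w' : Fin r → (Fin r →₀ ℕ) := fun i =>
      if h : X i ∈ P then w i h else 0 with hw'
    have hw'S : ∀ i ∈ A, w' i ∈ S := by
      intro i hi; rw [hw']; simp only [dif_pos ((hmemA i).mp hi)]; exact hwS i _
    have hw'i : ∀ i ∈ A, w' i i ≠ 0 := by
      intro i hi; rw [hw']; simp only [dif_pos ((hmemA i).mp hi)]; exact hwi i _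
    have hw'j : ∀ i ∈ A, ∀ j, j ≠ i → X j ∈ P → w' i j = 0 := by
      intro i hi j hji hXj; rw [hw']; simp only [dif_pos ((hmemA i).mp hi)]
      exact hwj i _ j hji hXj
    set W : Fin r →₀ ℕ := ∑ i ∈ A, k i • w' i with hW
    have hWapp : ∀ j, W j = ∑ i ∈ A, k i * w' i j := by
      intro j
      rw [hW, Finsupp.finset_sum_apply]
      apply Finset.sum_congr rfl
      intro i _
      simp
    have hWmem : monomial W (1 : K) ∈ I ^ (n + 1) := by
      rw [hW, ← hk3]
      apply monomial_prod_mem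
      intro i hi
      rw [hI]
      exact Ideal.subset_span ⟨w' i, hw'S i hi, rfl⟩
    set cW : Fin r →₀ ℕ := W.filter (fun j => X j ∉ P) with hcW
    have hcWapp : ∀ j, cW j = if X j ∉ P then W j else 0 := by
      intro j; rw [hcW, Finsupp.filter_apply]
    have hWle : W ≤ cW + z := by
      intro j
      show W j ≤ (cW + z) j
      rw [Finsupp.add_apply, hcWapp]
      by_cases hXj : X j ∈ P
      · rw [if_neg (by simpa using hXj)]
        have hjA : j ∈ A := (hmemA j).mpr hXj
        have hWj : W j = k j * w' j j := by
          rw [hWapp]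
          apply Finset.sum_eq_single_of_mem j hjA
          intro i hi hij
          rw [hw'j i hi j (Ne.symm hij) hXj, mul_zero]
        have hle1 : w' j j ≤ 1 := hS _ (hw'S j hjA) j
        have : W j ≤ k j := by
          rw [hWj]
          calc k j * w' j j ≤ k j * 1 := Nat.mul_le_mul_left _ hle1
          _ = k j := mul_one _
        exact le_trans this (by have := hk1 j; omega)
      · rw [if_pos (by simpa using hXj)]
        omega
    refine ⟨monomial cW (1 : K), ?_, ?_⟩
    · have : monomial cW (1 : K) * monomial z 1 = monomial (cW + z) (1 : K) := by
        rw [monomial_mul, one_mul]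
      rw [this]
      exact monomial_mem_of_le 1 hWle hWmem
    · rw [minPrime_eq_PA hI hP]
      apply monomial_not_mem_PA _ one_ne_zero
      intro i hi
      rw [hcWapp]
      simp only [Set.mem_setOf_eq] at hi
      rw [if_neg (by simpa using hi)]
  -- prime avoidance
  have hfin : I.minimalPrimes.Finite := by
    rw [Ideal.minimalPrimes_eq_comap]
    exact ((minimalPrimes.finite_of_isNoetherianRing _).image _)
  set sfin := hfin.toFinset with hsfin
  set Jcol := (I ^ (n + 1)).colon (Ideal.span {monomial z (1 : K)}) with hJcol
  have hnotsub : ¬ ((Jcol : Set (MvPolynomial (Fin r) K)) ⊆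
      ⋃ P ∈ (↑sfin : Set (Ideal (MvPolynomial (Fin r) K))), (id P : Ideal _)) := by
    intro hsub
    rw [Ideal.subset_union_prime ⊥ ⊥ ?hprime] at hsub
    case hprime =>
      intro Q hQ _ _
      exact (hfin.mem_toFinset.mp hQ).1.1
    obtain ⟨Q, hQs, hle⟩ := hsub
    have hQmin := hfin.mem_toFinset.mp hQs
    obtain ⟨t, ht1, ht2⟩ := htP Q hQmin
    exact ht2 (hle (Ideal.mem_colon_span_singleton.mpr ht1))
  obtain ⟨t, htJ, htU⟩ := Set.not_subset.mp hnotsub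
  rw [mem_symbPow]
  refine ⟨t, ?_, ?_⟩
  · intro P hPmin htP'
    apply htU
    simp only [Set.mem_iUnion]
    exact ⟨P, hfin.mem_toFinset.mpr hPmin, htP'⟩
  · have ht1 : t * monomial z (1 : K) ∈ I ^ (n + 1) := Ideal.mem_colon_span_singleton.mp htJ
    have hzc : monomial z c = C c * monomial z (1 : K) := by
      rw [C_apply, monomial_mul, zero_add, mul_one]
    rw [hzc, ← mul_assoc, mul_comm t (C c), mul_assoc]
    exact Ideal.mul_mem_left _ _ ht1

end Key

section Phi3
variable {K : Type*} [Field K] {p r : ℕ}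
variable {S : Set (Fin r →₀ ℕ)} {I : Ideal (MvPolynomial (Fin r) K)}

lemma list_prod_monomial (L : List (Fin r →₀ ℕ)) :
    (L.map fun v => monomial v (1 : K)).prod = monomial L.sum 1 := by
  induction L with
  | nil => simp [monomial_zero', C_1]
  | cons v L ih =>
      rw [List.map_cons, List.prod_cons, ih, List.sum_cons, monomial_mul, one_mul]

lemma smul_qdiv {e : Fin r →₀ ℕ} (hp : 0 < p) (h : ∀ i, p ∣ e i) :
    p • qdiv p e = e := by
  ext i
  have : (p • qdiv p e) i = p * (e i / p) := by
    simp [Finsupp.smul_apply]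
  rw [this, Nat.mul_div_cancel' (h i)]

lemma phiFun_zero (θ : K → K) : phiFun p θ (0 : MvPolynomial (Fin r) K) = 0 := by
  rw [phiFun, AddMonoidAlgebra.coeff_zero]
  exact Finsupp.sum_zero_index

lemma phiFun_mul_gen_mem (hp : p.Prime) [CharP K p] (θ : K → K) (hθ0 : θ 0 = 0)
    (hθa : ∀ a b, θ (a + b) = θ a + θ b)
    (hS : ∀ v ∈ S, ∀ i, v i ≤ 1)
    (hI : I = Ideal.span ((fun v => (monomial v (1 : K))) '' S))
    (n : ℕ) (a : MvPolynomial (Fin r) K) (L : List (Fin r →₀ ℕ))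
    (hL : ∀ v ∈ L, v ∈ S) (hlen : L.length = n * p + 1) :
    phiFun p θ (a * monomial L.sum (1 : K)) ∈ I.symbPow (n + 1) := by
  induction a using MvPolynomial.induction_on' with
  | add f g hf hg =>
      rw [add_mul, phiFun_add p θ hθ0 hθa]
      exact Ideal.add_mem _ hf hg
  | monomial u b =>
      rw [monomial_mul, mul_one, phiFun_monomial p θ hθ0]
      by_cases h : ∀ i, p ∣ (u + L.sum) i
      · rw [if_pos h]
        exact key_mem_symbPow hp hS hI n (qdiv p (u + L.sum)) u (θ b) L hL hlen
          (by rw [smul_qdiv hp.pos h])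
      · rw [if_neg h]; exact Ideal.zero_mem _

end Phi3

section Final
open scoped Pointwise
variable {K : Type*} [Field K] {p r : ℕ}
variable {S : Set (Fin r →₀ ℕ)} {I : Ideal (MvPolynomial (Fin r) K)}

lemma phiFun_pow_mem (hp : p.Prime) [CharP K p] (θ : K → K) (hθ0 : θ 0 = 0)
    (hθa : ∀ a b, θ (a + b) = θ a + θ b)
    (hS : ∀ v ∈ S, ∀ i, v i ≤ 1)
    (hI : I = Ideal.span ((fun v => (monomial v (1 : K))) '' S))
    (n : ℕ) {y : MvPolynomial (Fin r) K} (hy : y ∈ I ^ (n * p + 1)) :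
    phiFun p θ y ∈ I.symbPow (n + 1) := by
  set m := n * p + 1 with hm
  set G : Set (MvPolynomial (Fin r) K) := (fun v => monomial v (1 : K)) '' S with hG
  have hIm : I ^ m = Ideal.span (G ^ m) := by
    rw [hI]
    exact Submodule.span_pow G m
  rw [hIm] at hy
  rw [Ideal.span, Submodule.mem_span_set] at hy
  obtain ⟨cf, hsupp, hsum⟩ := hy
  rw [← hsum]
  clear hsum
  revert hsupp
  induction cf using Finsupp.induction with
  | zero =>
      intro _
      rw [Finsupp.sum_zero_index, phiFun_zero]
      exact Ideal.zero_mem _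
  | single_add g b cf' hgs hb ih =>
      intro hsupp
      have hsupp' : (cf'.support : Set (MvPolynomial (Fin r) K)) ⊆ G ^ m := by
        intro x hx
        apply hsupp
        rw [Finsupp.support_add_eq]
        · exact Finset.mem_union_right _ hx
        · rw [Finsupp.support_single_ne_zero g hb]
          simpa using hgs
      have hgG : g ∈ G ^ m := by
        apply hsupp
        rw [Finsupp.support_add_eq]
        · apply Finset.mem_union_left
          rw [Finsupp.support_single_ne_zero g hb]
          exact Finset.mem_singleton_self g
        · rw [Finsupp.support_single_ne_zero g hb]
          simpa using hgs
      have hdecomp : (Finsupp.single g b + cf').sum (fun mi r => r • mi)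
          = b • g + cf'.sum (fun mi r => r • mi) := by
        rw [Finsupp.sum_add_index (fun mi _ => zero_smul _ mi)
          (fun mi _ r1 r2 => add_smul r1 r2 mi), Finsupp.sum_single_index (zero_smul _ g)]
      rw [hdecomp, phiFun_add p θ hθ0 hθa]
      apply Ideal.add_mem _ _ (ih hsupp')
      -- b • g with g a product of m generators
      obtain ⟨f, hprod⟩ := Set.mem_pow.mp hgG
      have hchoice : ∀ i : Fin m, ∃ vv ∈ S, monomial vv (1 : K) = (f i : MvPolynomial (Fin r) K) := by
        intro i
        obtain ⟨vv, hvv, heq⟩ := (f i).2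
        exact ⟨vv, hvv, heq⟩
      choose v hvS hveq using hchoice
      set L : List (Fin r →₀ ℕ) := List.ofFn v with hL
      have hgL : g = monomial L.sum (1 : K) := by
        rw [← hprod, ← list_prod_monomial]
        congr 1
        rw [hL, List.map_ofFn]
        exact congrArg List.ofFn (funext fun i => (hveq i).symm)
      rw [hgL, smul_eq_mul]
      exact phiFun_mul_gen_mem hp θ hθ0 hθa hS hI n b L
        (by
          intro x hx
          obtain ⟨i, hi⟩ := List.mem_ofFn.mp (hL ▸ hx)
          exact hi ▸ hvS i)
        (by rw [hL, List.length_ofFn])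

end Final

/-- A square-free monomial ideal in a polynomial ring over an `F`-finite field
of characteristic `p` is symbolic `F`-pure: there is a Frobenius splitting `φ` with
`φ((I^{(np+1)})^{1/p}) ⊆ I^{(n+1)}` for all `n ≥ 0`. -/
theorem squarefree_monomial_symbolic_fpure
    (K : Type*) [Field K] (p r : ℕ) (hp : p.Prime) [CharP K p]
    (hFF : IsFFiniteRing p K)
    (S : Set (Fin r →₀ ℕ)) (hS : ∀ v ∈ S, ∀ i, v i ≤ 1)
    (I : Ideal (MvPolynomial (Fin r) K))
    (hI : I = Ideal.span ((fun v => (MvPolynomial.monomial v (1 : K))) '' S)) :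
    IsFPureFiltration p (fun n => I.symbPow n) := by
  obtain ⟨θ, hθa, hθm, hθ1⟩ := exists_field_splitting K p hp
  have hθ0 : θ 0 = 0 := by
    have h := hθa 0 0
    rw [add_zero] at h
    exact (left_eq_add.mp h)
  constructor
  · refine ⟨?_, ?_, ?_⟩
    · show I.symbPow 0 = ⊤
      rw [eq_top_iff]
      intro x _
      rw [mem_symbPow]
      exact ⟨1, fun P hP h1 => hP.1.1.ne_top ((Ideal.eq_top_iff_one P).mpr h1),
        by simp [Ideal.one_eq_top]⟩
    · intro n x hx
      rw [mem_symbPow] at hx ⊢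
      obtain ⟨s, hs, hsx⟩ := hx
      exact ⟨s, hs, Ideal.pow_le_pow_right (Nat.le_succ n) hsx⟩
    · intro m n
      show I.symbPow m * I.symbPow n ≤ I.symbPow (m + n)
      rw [Ideal.mul_le]
      intro a ha b hb
      rw [mem_symbPow] at ha hb
      obtain ⟨s, hs, hsa⟩ := ha
      obtain ⟨t, ht, htb⟩ := hb
      rw [mem_symbPow]
      refine ⟨s * t, fun P hP hst => (hP.1.1.mem_or_mem hst).elim (hs P hP) (ht P hP), ?_⟩
      have h1 : s * t * (a * b) = (s * a) * (t * b) := by ring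
      rw [h1, pow_add]
      exact Ideal.mul_mem_mul hsa htb
  · refine ⟨phiFun p θ, ⟨phiFun_add p θ hθ0 hθa, ?_, phiFun_one hp θ hθ1 hθ0⟩, ?_⟩
    · intro a b
      exact phiFun_pow_mul hp θ hθ0 hθa hθm a b
    · intro n x hx
      show phiFun p θ x ∈ I.symbPow (n + 1)
      rw [show ((fun n => I.symbPow n) (n * p + 1)) = I.symbPow (n * p + 1) from rfl,
        mem_symbPow] at hx
      obtain ⟨s, hs, hsx⟩ := hx
      have h1 : s ^ p * x ∈ I ^ (n * p + 1) := by
        have h2 : s ^ p * x = s ^ (p - 1) * (s * x) := by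
          rw [← mul_assoc, ← pow_succ, Nat.sub_add_cancel hp.one_le]
        rw [h2]
        exact Ideal.mul_mem_left _ _ hsx
      have h2 : phiFun p θ (s ^ p * x) ∈ I.symbPow (n + 1) :=
        phiFun_pow_mem hp θ hθ0 hθa hS hI n h1
      rw [phiFun_pow_mul hp θ hθ0 hθa hθm] at h2
      rw [mem_symbPow] at h2 ⊢
      obtain ⟨t, ht, htx⟩ := h2
      exact ⟨t * s, fun P hP hmem => (hP.1.1.mem_or_mem hmem).elim (ht P hP) (hs P hP),
        by rwa [mul_assoc]⟩
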